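/- Let Ω ⊆ ℝ³ be a helical domain with cross-section D = {(x₁,x₂) : (x₁,x₂,0) ∈ Ω} simply-connected, bounded and smooth, let v be a C¹ helical, divergence-free vector field on Ω with v·n = 0 on ∂Ω, and let φ : D → ℝ be the stream function of the orthogonal part u = v − v_ξ ξ/|ξ|² (i.e. φ = 0 on ∂D and (u₁,u₂)(x₁,x₂,0) = |ξ|⁻² ((−x₁x₂, h²+x₁²), (−(h²+x₂²), x₁x₂)) ∇φ(x₁,x₂)). Then for every helical C¹ scalar function g on Ω and every (x₁,x₂) ∈ D, (v·∇g)(x₁,x₂,0) = ∇⊥φ(x₁,x₂)·∇g(x₁,x₂,0), where ∇⊥φ = (∂_{x₂}φ, −∂_{x₁}φ). -/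

import Mathlib

noncomputable section

open Real

/-- ℝ³ as functions `Fin 3 → ℝ`. -/
abbrev V3 := Fin 3 → ℝ

/-- ℝ² as functions `Fin 2 → ℝ`. -/
abbrev V2 := Fin 2 → ℝ

/-- Partial derivative `∂_{x_i} f` of a scalar function on ℝ³. -/
def pd3 (i : Fin 3) (f : V3 → ℝ) (x : V3) : ℝ := fderiv ℝ f x (Pi.single i 1)

/-- Partial derivative `∂_{x_i} f` of a scalar function on ℝ². -/
def pd2 (i : Fin 2) (f : V2 → ℝ) (x : V2) : ℝ := fderiv ℝ f x (Pi.single i 1)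

/-- Embedding of the cross-section plane: `(x₁,x₂) ↦ (x₁,x₂,0)`. -/
def emb (p : V2) : V3 := ![p 0, p 1, 0]

/-- The helical transformation `H_θ(x) = Q_θ x + (0,0,hθ)`. -/
def Hmap (h θ : ℝ) (x : V3) : V3 :=
  ![x 0 * Real.cos θ + x 1 * Real.sin θ,
    -(x 0) * Real.sin θ + x 1 * Real.cos θ,
    x 2 + h * θ]

/-- The rotation `Q_θ = diag(R_θ, 1)` acting on vectors of ℝ³. -/
def Qrot (θ : ℝ) (v : V3) : V3 :=
  ![v 0 * Real.cos θ + v 1 * Real.sin θ,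
    -(v 0) * Real.sin θ + v 1 * Real.cos θ,
    v 2]

/-- The vector field `ξ(x) = (x₂, −x₁, h)`. -/
def xiVec (h : ℝ) (x : V3) : V3 := ![x 1, -(x 0), h]

/-- `|ξ(x)|² = h² + x₁² + x₂²`. -/
def xiNormSq (h : ℝ) (x : V3) : ℝ := h ^ 2 + (x 0) ^ 2 + (x 1) ^ 2

/-- The helical swirl `v_ξ = v ⋅ ξ`. -/
def swirl (h : ℝ) (v : V3 → V3) (x : V3) : ℝ := ∑ i : Fin 3, v x i * xiVec h x i

/-- The orthogonal part `u = v − v_ξ ξ / |ξ|²` of a vector field `v`. -/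
def orthPart (h : ℝ) (v : V3 → V3) (x : V3) : V3 :=
  fun i => v x i - swirl h v x * xiVec h x i / xiNormSq h x

/-- `n` is an outward normal vector of `Ω` at the boundary point `x`. -/
def IsOutwardNormal (Ω : Set V3) (x n : V3) : Prop :=
  ∃ ε > (0 : ℝ), (∀ t ∈ Set.Ioo (0 : ℝ) ε, x + t • n ∉ closure Ω) ∧
    (∀ t ∈ Set.Ioo (0 : ℝ) ε, x - t • n ∈ Ω)

/-- Auxiliary: a helical C¹ scalar has vanishing derivative along `ξ`. -/
lemma xi_deriv_zero (h : ℝ) (Ω : Set V3) (hΩopen : IsOpen Ω)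
    (g : V3 → ℝ) (hg : ContDiffOn ℝ 1 g Ω)
    (hghel : ∀ θ : ℝ, ∀ x ∈ Ω, g (Hmap h θ x) = g x)
    (x : V3) (hx : x ∈ Ω) :
    x 1 * pd3 0 g x - x 0 * pd3 1 g x + h * pd3 2 g x = 0 := by
  have hgd : DifferentiableAt ℝ g x :=
    ((hg x hx).differentiableWithinAt one_ne_zero).differentiableAt (hΩopen.mem_nhds hx)
  set F : ℝ → V3 := fun θ => Hmap h θ x with hF
  have hF0 : F 0 = x := by
    funext i; fin_cases i <;> simp [hF, Hmap]
  have hFd : HasDerivAt F ![x 1, -(x 0), h] 0 := by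
    rw [hasDerivAt_pi]
    intro i
    fin_cases i
    · have : HasDerivAt (fun θ : ℝ => x 0 * Real.cos θ + x 1 * Real.sin θ)
        (x 0 * (-Real.sin 0) + x 1 * Real.cos 0) 0 :=
        ((Real.hasDerivAt_cos 0).const_mul (x 0)).add ((Real.hasDerivAt_sin 0).const_mul (x 1))
      simpa [hF, Hmap] using this
    · have : HasDerivAt (fun θ : ℝ => -(x 0) * Real.sin θ + x 1 * Real.cos θ)
        (-(x 0) * Real.cos 0 + x 1 * (-Real.sin 0)) 0 :=
        ((Real.hasDerivAt_sin 0).const_mul (-(x 0))).add ((Real.hasDerivAt_cos 0).const_mul (x 1))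
      simpa [hF, Hmap] using this
    · have : HasDerivAt (fun θ : ℝ => x 2 + h * θ) (h * 1) 0 :=
        ((hasDerivAt_id 0).const_mul h).const_add (x 2)
      simpa [hF, Hmap] using this
  have hcomp : HasDerivAt (fun θ => g (F θ)) ((fderiv ℝ g x) ![x 1, -(x 0), h]) 0 := by
    have h1 : HasFDerivAt g (fderiv ℝ g x) (F 0) := by rw [hF0]; exact hgd.hasFDerivAt
    exact h1.comp_hasDerivAt 0 hFd
  have hconst : (fun θ => g (F θ)) = fun _ => g x := by
    funext θ; exact hghel θ x hx
  have hzero : (fderiv ℝ g x) ![x 1, -(x 0), h] = 0 := by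
    have h2 : HasDerivAt (fun θ => g (F θ)) 0 0 := by
      rw [hconst]; exact hasDerivAt_const 0 (g x)
    exact hcomp.unique h2
  have hdecomp : (![x 1, -(x 0), h] : Fin 3 → ℝ) =
      x 1 • (Pi.single 0 1 : Fin 3 → ℝ) + (-(x 0)) • (Pi.single 1 1 : Fin 3 → ℝ)
        + h • (Pi.single 2 1 : Fin 3 → ℝ) := by
    funext i; fin_cases i <;> simp [Pi.single_apply]
  rw [hdecomp] at hzero
  simp only [map_add, map_smul, smul_eq_mul] at hzero
  simp only [pd3]
  linarith

/-- For a helical divergence-free tangent field `v` with stream function `φ`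
of its orthogonal part, and any helical C¹ scalar `g`,
`(v ⋅ ∇g)(x₁,x₂,0) = ∇⊥φ ⋅ ∇g(x₁,x₂,0)` on the cross-section `D`. -/

theorem transport_via_stream_function (h : ℝ) (hh : 0 < h)
    (Ω : Set V3) (hΩopen : IsOpen Ω) (hΩ : ∀ θ : ℝ, Hmap h θ '' Ω = Ω)
    (D : Set V2) (hD : D = {p : V2 | emb p ∈ Ω})
    (hDconn : IsConnected D) (hDsc : SimplyConnectedSpace D)
    (hDbdd : Bornology.IsBounded D)
    (v : V3 → V3) (hv : ∀ i : Fin 3, ContDiffOn ℝ 1 (fun x => v x i) Ω)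
    (hhel : ∀ θ : ℝ, ∀ x ∈ Ω, v (Hmap h θ x) = Qrot θ (v x))
    (hdiv : ∀ x ∈ Ω, ∑ i : Fin 3, pd3 i (fun y => v y i) x = 0)
    (hbc : ∀ x ∈ frontier Ω, ∀ n : V3, IsOutwardNormal Ω x n →
      ∑ i : Fin 3, v x i * n i = 0)
    (φ : V2 → ℝ) (hφ0 : ∀ p ∈ frontier D, φ p = 0)
    (hφ : ∀ p ∈ D,
      orthPart h v (emb p) 0 =
        (-(p 0 * p 1) * pd2 0 φ p + (h ^ 2 + (p 0) ^ 2) * pd2 1 φ p) /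
          (h ^ 2 + (p 0) ^ 2 + (p 1) ^ 2) ∧
      orthPart h v (emb p) 1 =
        (-(h ^ 2 + (p 1) ^ 2) * pd2 0 φ p + p 0 * p 1 * pd2 1 φ p) /
          (h ^ 2 + (p 0) ^ 2 + (p 1) ^ 2))
    (g : V3 → ℝ) (hg : ContDiffOn ℝ 1 g Ω)
    (hghel : ∀ θ : ℝ, ∀ x ∈ Ω, g (Hmap h θ x) = g x) :
    ∀ p ∈ D,
      ∑ i : Fin 3, v (emb p) i * pd3 i g (emb p) =
        pd2 1 φ p * pd3 0 g (emb p) - pd2 0 φ p * pd3 1 g (emb p) := by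
  intro p hp
  have hx : emb p ∈ Ω := by rw [hD] at hp; exact hp
  have hemb0 : emb p 0 = p 0 := rfl
  have hemb1 : emb p 1 = p 1 := rfl
  have hemb2 : emb p 2 = 0 := rfl
  set a := pd3 0 g (emb p)
  set b := pd3 1 g (emb p)
  set c := pd3 2 g (emb p)
  set v0 := v (emb p) 0
  set v1 := v (emb p) 1
  set v2 := v (emb p) 2
  set f0 := pd2 0 φ p
  set f1 := pd2 1 φ p
  set S := h ^ 2 + (p 0) ^ 2 + (p 1) ^ 2 with hSdef
  have hS : S ≠ 0 := by positivity
  have hhne : h ≠ 0 := ne_of_gt hh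
  set w := v0 * p 1 - v1 * p 0 + v2 * h with hwdef
  -- e3 : ξ·∇g = 0
  have e3 : p 1 * a - p 0 * b + h * c = 0 := by
    have := xi_deriv_zero h Ω hΩopen g hg hghel (emb p) hx
    simpa [hemb0, hemb1] using this
  -- swirl computation
  have hswirl : swirl h v (emb p) = w := by
    simp only [swirl, Fin.sum_univ_three, xiVec, hwdef]
    simp [hemb0, hemb1, Matrix.cons_val_zero, Matrix.cons_val_one]
    ring
  have hnormsq : xiNormSq h (emb p) = S := by
    simp [xiNormSq, hemb0, hemb1, hSdef]
  obtain ⟨H1, H2⟩ := hφ p hp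
  have e1 : v0 * S - w * p 1 = -(p 0 * p 1) * f0 + (h ^ 2 + (p 0) ^ 2) * f1 := by
    have H1' : v0 - w * p 1 / S =
        (-(p 0 * p 1) * f0 + (h ^ 2 + (p 0) ^ 2) * f1) / S := by
      have := H1
      simp only [orthPart, hswirl, hnormsq, xiVec] at this
      simpa [hemb1] using this
    field_simp at H1'
    linarith
  have e2 : v1 * S + w * p 0 = -(h ^ 2 + (p 1) ^ 2) * f0 + p 0 * p 1 * f1 := by
    have ho1 : orthPart h v (emb p) 1 = v1 + w * p 0 / S := by
      simp only [orthPart, hswirl, hnormsq, xiVec]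
      simp only [Matrix.cons_val_one, Matrix.head_cons, Matrix.cons_val_zero, hemb0]
      ring
    have H2' : v1 + w * p 0 / S =
        (-(h ^ 2 + (p 1) ^ 2) * f0 + p 0 * p 1 * f1) / S := by
      rw [← ho1]; exact H2
    field_simp at H2'
    linarith
  -- main algebraic identity
  have key : (v0 * a + v1 * b + v2 * c) * (S * h ^ 2) = (f1 * a - f0 * b) * (S * h ^ 2) := by
    linear_combination ((h ^ 2 + (p 1) ^ 2) * a - p 0 * p 1 * b) * e1 +
      ((h ^ 2 + (p 0) ^ 2) * b - p 0 * p 1 * a) * e2 + (S * v2 * h) * e3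
  have hSh : S * h ^ 2 ≠ 0 := mul_ne_zero hS (pow_ne_zero 2 hhne)
  have final : v0 * a + v1 * b + v2 * c = f1 * a - f0 * b :=
    mul_right_cancel₀ hSh key
  simpa [Fin.sum_univ_three] using final
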